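/- Let G be a group with a left-invariant partial order < admitting a left-invariant simply connected extension (∼_u, ∼_l) which is rectifiable, and let H be a completely convex normal subgroup of G. Then the relation <' is a left-invariant partial order on the quotient group G/H, and (∼_u', ∼_l') is a rectifiable left-invariant simply connected extension of <'. -/
import Mathlib


open Pointwise

namespace PaperSC

variable {S : Type*}

/-- Exactly one of four propositions holds. -/
def ExactlyOne4 (p q r s : Prop) : Prop :=
  (p ∨ q ∨ r ∨ s) ∧ (p → ¬q ∧ ¬r ∧ ¬s) ∧ (q → ¬r ∧ ¬s) ∧ (r → ¬s)

/-- `x` and `y` are incomparable with respect to the strict order `lt`. -/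
def Incomp (lt : S → S → Prop) (x y : S) : Prop :=
  x ≠ y ∧ ¬ lt x y ∧ ¬ lt y x

/-- The reflexive closure of `lt`. -/
def Le' (lt : S → S → Prop) (x y : S) : Prop := x = y ∨ lt x y

/-- `x ∼ᵤ y` : `x` and `y` are incomparable and have a common upper bound. -/
def SimU (lt : S → S → Prop) (x y : S) : Prop :=
  Incomp lt x y ∧ ∃ z, Le' lt x z ∧ Le' lt y z

/-- `x ∼ₗ y` : `x` and `y` are incomparable and have a common lower bound. -/
def SimL (lt : S → S → Prop) (x y : S) : Prop :=
  Incomp lt x y ∧ ∃ z, Le' lt z x ∧ Le' lt z y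

/-- Every incomparable pair has a common upper bound or a common lower bound. -/
def StronglyConnectedRel (lt : S → S → Prop) : Prop :=
  ∀ x y, Incomp lt x y → SimU lt x y ∨ SimL lt x y

/-- Acyclicity: `x ∼ᵤ y` and `x ∼ₗ z` imply `y < z`. -/
def AcyclicRel (lt : S → S → Prop) : Prop :=
  ∀ x y z, SimU lt x y → SimL lt x z → lt y z

/-- `(u, l)` is a simply connected extension of the strict partial order `lt`. -/
structure IsSCExt (lt u l : S → S → Prop) : Prop where
  u_symm : ∀ x y, u x y → u y x
  l_symm : ∀ x y, l x y → l y x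
  exactly_one : ∀ x y, x ≠ y → ExactlyOne4 (lt x y) (lt y x) (u x y) (l x y)
  u_of_ub : ∀ x y, Incomp lt x y → (∃ z, Le' lt x z ∧ Le' lt y z) → u x y
  l_of_lb : ∀ x y, Incomp lt x y → (∃ z, Le' lt z x ∧ Le' lt z y) → l x y
  acyclic : ∀ x y z, u x y → l x z → lt y z

/-- `b` is between `a` and `c` (with respect to `lt` and the extension `(u, l)`). -/
def Btwn (lt u l : S → S → Prop) (a c b : S) : Prop :=
  (lt a c ∧ ((lt a b ∧ lt b c) ∨ (u a b ∧ l b c))) ∨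
  (lt c a ∧ ((lt c b ∧ lt b a) ∨ (u c b ∧ l b a))) ∨
  (l a c ∧ ((l a b ∧ lt b c) ∨ (l c b ∧ lt b a))) ∨
  (u a c ∧ ((u a b ∧ lt c b) ∨ (u c b ∧ lt a b)))

/-- The between set `B_{a,b}`; it equals `{a}` when `a = b`. -/
def BSet (lt u l : S → S → Prop) (a b : S) : Set S :=
  {a, b} ∪ {x | a ≠ b ∧ Btwn lt u l a b x}

/-- The set `A` is totally ordered by `lt`. -/
def IsChainRel (lt : S → S → Prop) (A : Set S) : Prop :=
  ∀ p ∈ A, ∀ q ∈ A, p = q ∨ lt p q ∨ lt q p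

/-- `x O y` iff `B_{x,y}` is totally ordered by `lt`. -/
def ORel (lt u l : S → S → Prop) (x y : S) : Prop :=
  IsChainRel lt (BSet lt u l x y)

/-- The extension is rectifiable: every between set is a finite union of `O`-classes. -/
def Rectifiable (lt u l : S → S → Prop) : Prop :=
  ∀ a b : S, a ≠ b → ∃ F : Finset S,
    (↑F : Set S) ⊆ BSet lt u l a b ∧
    ∀ x ∈ BSet lt u l a b, ∃ c ∈ F, ORel lt u l x c

/-- A relation on a group is left-invariant. -/
def LeftInvariant {G : Type*} [Group G] (r : G → G → Prop) : Prop :=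
  ∀ f g h : G, r g h → r (f * g) (f * h)

/-- A subgroup `H` is completely convex: between sets of elements of `H` lie in `H`. -/
def CompletelyConvex {G : Type*} [Group G] (lt u l : G → G → Prop) (H : Subgroup G) : Prop :=
  ∀ h1 ∈ H, ∀ h2 ∈ H, BSet lt u l h1 h2 ⊆ (H : Set G)

/-- The relation induced on the quotient `G ⧸ H` by a relation `r` on `G`:
`g₁H r' g₂H` iff the cosets are distinct and `r g₁ (g₂ h)` for some `h ∈ H`. -/
def QRel {G : Type*} [Group G] (r : G → G → Prop) (H : Subgroup G) (x y : G ⧸ H) : Prop :=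
  x ≠ y ∧ ∃ g1 g2 : G, (g1 : G ⧸ H) = x ∧ (g2 : G ⧸ H) = y ∧ ∃ h ∈ H, r g1 (g2 * h)

section Aux
set_option linter.unusedSectionVars false
set_option linter.unusedVariables false

variable {G : Type*} [Group G] {lt u l : G → G → Prop} {H : Subgroup G}

lemma asym (hirr : ∀ x : G, ¬ lt x x) (htrans : ∀ x y z : G, lt x y → lt y z → lt x z)
    {x y : G} (h : lt x y) : ¬ lt y x :=
  fun h' => hirr x (htrans x y x h h')

lemma eo_of_p {p q r s : Prop} (h : ExactlyOne4 p q r s) (hp : p) : ¬q ∧ ¬r ∧ ¬s := h.2.1 hp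
lemma eo_of_q {p q r s : Prop} (h : ExactlyOne4 p q r s) (hq : q) : ¬p ∧ ¬r ∧ ¬s :=
  ⟨fun hp => (h.2.1 hp).1 hq, h.2.2.1 hq⟩
lemma eo_of_r {p q r s : Prop} (h : ExactlyOne4 p q r s) (hr : r) : ¬p ∧ ¬q ∧ ¬s :=
  ⟨fun hp => (h.2.1 hp).2.1 hr, fun hq => (h.2.2.1 hq).1 hr, h.2.2.2 hr⟩
lemma eo_of_s {p q r s : Prop} (h : ExactlyOne4 p q r s) (hs : s) : ¬p ∧ ¬q ∧ ¬r :=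
  ⟨fun hp => (h.2.1 hp).2.2 hs, fun hq => (h.2.2.1 hq).2 hs, fun hr => h.2.2.2 hr hs⟩

lemma u_incomp (hsce : IsSCExt lt u l) {x y : G} (hne : x ≠ y) (hu : u x y) :
    Incomp lt x y :=
  ⟨hne, (eo_of_r (hsce.exactly_one x y hne) hu).1, (eo_of_r (hsce.exactly_one x y hne) hu).2.1⟩

lemma l_incomp (hsce : IsSCExt lt u l) {x y : G} (hne : x ≠ y) (hl : l x y) :
    Incomp lt x y :=
  ⟨hne, (eo_of_s (hsce.exactly_one x y hne) hl).1, (eo_of_s (hsce.exactly_one x y hne) hl).2.1⟩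

lemma btwn_inv (hltinv : LeftInvariant lt) (huinv : LeftInvariant u) (hlinv : LeftInvariant l)
    (f : G) {a c b : G} (h : Btwn lt u l a c b) : Btwn lt u l (f*a) (f*c) (f*b) := by
  rcases h with ⟨h1, h2 | h2⟩ | ⟨h1, h2 | h2⟩ | ⟨h1, h2 | h2⟩ | ⟨h1, h2 | h2⟩
  · exact Or.inl ⟨hltinv f _ _ h1, Or.inl ⟨hltinv f _ _ h2.1, hltinv f _ _ h2.2⟩⟩
  · exact Or.inl ⟨hltinv f _ _ h1, Or.inr ⟨huinv f _ _ h2.1, hlinv f _ _ h2.2⟩⟩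
  · exact Or.inr (Or.inl ⟨hltinv f _ _ h1, Or.inl ⟨hltinv f _ _ h2.1, hltinv f _ _ h2.2⟩⟩)
  · exact Or.inr (Or.inl ⟨hltinv f _ _ h1, Or.inr ⟨huinv f _ _ h2.1, hlinv f _ _ h2.2⟩⟩)
  · exact Or.inr (Or.inr (Or.inl ⟨hlinv f _ _ h1, Or.inl ⟨hlinv f _ _ h2.1, hltinv f _ _ h2.2⟩⟩))
  · exact Or.inr (Or.inr (Or.inl ⟨hlinv f _ _ h1, Or.inr ⟨hlinv f _ _ h2.1, hltinv f _ _ h2.2⟩⟩))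
  · exact Or.inr (Or.inr (Or.inr ⟨huinv f _ _ h1, Or.inl ⟨huinv f _ _ h2.1, hltinv f _ _ h2.2⟩⟩))
  · exact Or.inr (Or.inr (Or.inr ⟨huinv f _ _ h1, Or.inr ⟨huinv f _ _ h2.1, hltinv f _ _ h2.2⟩⟩))

/-- Cosets of a completely convex subgroup are convex for the betweenness relation. -/
lemma coset_convex (hltinv : LeftInvariant lt) (huinv : LeftInvariant u)
    (hlinv : LeftInvariant l) (hcc : CompletelyConvex lt u l H)
    {p q x : G} (hpq : (p : G ⧸ H) = (q : G ⧸ H)) (hx : x ∈ BSet lt u l p q) :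
    (x : G ⧸ H) = (p : G ⧸ H) := by
  rcases hx with hx | ⟨hne, hbtwn⟩
  · rcases hx with rfl | hx
    · rfl
    · rcases hx with rfl; exact hpq.symm
  · have hk : p⁻¹ * q ∈ H := QuotientGroup.eq.mp hpq
    have hb : Btwn lt u l (p⁻¹*p) (p⁻¹*q) (p⁻¹*x) := btwn_inv hltinv huinv hlinv p⁻¹ hbtwn
    rw [inv_mul_cancel] at hb
    have hne1 : (1:G) ≠ p⁻¹ * q := by
      intro h; exact hne (by rw [← mul_one p, h]; group)
    have hmem : p⁻¹ * x ∈ BSet lt u l 1 (p⁻¹*q) :=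
      Set.mem_union_right _ ⟨hne1, hb⟩
    have := hcc 1 (one_mem H) (p⁻¹*q) hk hmem
    exact (QuotientGroup.eq.mpr this).symm

/-- Key lemma 1: if `1 ∼ᵤ t` and `t < k` with `k ∈ H`, then `t ∈ H`. -/
lemma key1 (hirr : ∀ x : G, ¬ lt x x) (htrans : ∀ x y z : G, lt x y → lt y z → lt x z)
    (hltinv : LeftInvariant lt) (huinv : LeftInvariant u) (hlinv : LeftInvariant l)
    (hsce : IsSCExt lt u l) [H.Normal] (hcc : CompletelyConvex lt u l H)
    {t k : G} (hu : u 1 t) (hlt : lt t k) (hk : k ∈ H) : t ∈ H := by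
  by_cases ht1 : t = 1
  · rw [ht1]; exact one_mem H
  have hut : u t⁻¹ 1 := by have := huinv t⁻¹ 1 t hu; simpa using this
  have hu' : u 1 t⁻¹ := hsce.u_symm _ _ hut
  have hne' : (1:G) ≠ t⁻¹ := fun h => ht1 (by rw [← inv_inv t, ← h, inv_one])
  have hmH : t⁻¹ * k⁻¹ * t ∈ H := by
    have := Subgroup.Normal.conj_mem ‹H.Normal› k⁻¹ (inv_mem hk) t⁻¹
    simpa [mul_assoc] using this
  set m : G := t⁻¹ * k⁻¹ * t with hm
  have hmt : lt m t⁻¹ := by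
    have := hltinv (t⁻¹ * k⁻¹) t k hlt
    simpa [hm, mul_assoc] using this
  have hInc : Incomp lt 1 t⁻¹ := u_incomp hsce hne' hu'
  have h1m_ne : (1:G) ≠ m := by
    intro h; rw [← h] at hmt; exact hInc.2.1 hmt
  have hn1m : ¬ lt 1 m := fun h => hInc.2.1 (htrans _ _ _ h hmt)
  have hnm1 : ¬ lt m 1 := by
    intro h
    have hl' : l 1 t⁻¹ := hsce.l_of_lb 1 t⁻¹ hInc ⟨m, Or.inr h, Or.inr hmt⟩
    exact (eo_of_r (hsce.exactly_one 1 t⁻¹ hne') hu').2.2 hl'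
  have hu1m : u 1 m := by
    rcases (hsce.exactly_one 1 m h1m_ne).1 with h | h | h | h
    · exact absurd h hn1m
    · exact absurd h hnm1
    · exact h
    · exact absurd hmt (asym hirr htrans (hsce.acyclic 1 t⁻¹ m hu' h))
  have hbtwn : Btwn lt u l 1 m t⁻¹ :=
    Or.inr (Or.inr (Or.inr ⟨hu1m, Or.inl ⟨hu', hmt⟩⟩))
  have hmem : t⁻¹ ∈ BSet lt u l 1 m := Set.mem_union_right _ ⟨h1m_ne, hbtwn⟩
  have := hcc 1 (one_mem H) m hmH hmem
  exact (inv_mem_iff (H := H)).mp this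

/-- Key lemma 2: if `1 ∼ₗ t` and `k < t` with `k ∈ H`, then `t ∈ H`. -/
lemma key2 (hirr : ∀ x : G, ¬ lt x x) (htrans : ∀ x y z : G, lt x y → lt y z → lt x z)
    (hltinv : LeftInvariant lt) (huinv : LeftInvariant u) (hlinv : LeftInvariant l)
    (hsce : IsSCExt lt u l) [H.Normal] (hcc : CompletelyConvex lt u l H)
    {t k : G} (hl : l 1 t) (hlt : lt k t) (hk : k ∈ H) : t ∈ H := by
  by_cases ht1 : t = 1
  · rw [ht1]; exact one_mem H
  have hlt' : l t⁻¹ 1 := by have := hlinv t⁻¹ 1 t hl; simpa using this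
  have hl' : l 1 t⁻¹ := hsce.l_symm _ _ hlt'
  have hne' : (1:G) ≠ t⁻¹ := fun h => ht1 (by rw [← inv_inv t, ← h, inv_one])
  have hmH : t⁻¹ * k⁻¹ * t ∈ H := by
    have := Subgroup.Normal.conj_mem ‹H.Normal› k⁻¹ (inv_mem hk) t⁻¹
    simpa [mul_assoc] using this
  set m : G := t⁻¹ * k⁻¹ * t with hm
  have hmt : lt t⁻¹ m := by
    have := hltinv (t⁻¹ * k⁻¹) k t hlt
    simpa [hm, mul_assoc] using this
  have hInc : Incomp lt 1 t⁻¹ := l_incomp hsce hne' hl'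
  have h1m_ne : (1:G) ≠ m := by
    intro h; rw [← h] at hmt; exact hInc.2.2 hmt
  have hnm1 : ¬ lt m 1 := fun h => hInc.2.2 (htrans _ _ _ hmt h)
  have hn1m : ¬ lt 1 m := by
    intro h
    have hu' : u 1 t⁻¹ := hsce.u_of_ub 1 t⁻¹ hInc ⟨m, Or.inr h, Or.inr hmt⟩
    exact (eo_of_r (hsce.exactly_one 1 t⁻¹ hne') hu').2.2 hl'
  have hl1m : l 1 m := by
    rcases (hsce.exactly_one 1 m h1m_ne).1 with h | h | h | h
    · exact absurd h hn1m
    · exact absurd h hnm1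
    · exact absurd hmt (asym hirr htrans (hsce.acyclic 1 m t⁻¹ h hl'))
    · exact h
  have hbtwn : Btwn lt u l 1 m t⁻¹ :=
    Or.inr (Or.inr (Or.inl ⟨hl1m, Or.inl ⟨hl', hmt⟩⟩))
  have hmem : t⁻¹ ∈ BSet lt u l 1 m := Set.mem_union_right _ ⟨h1m_ne, hbtwn⟩
  have := hcc 1 (one_mem H) m hmH hmem
  exact (inv_mem_iff (H := H)).mp this

lemma key1' (hirr : ∀ x : G, ¬ lt x x) (htrans : ∀ x y z : G, lt x y → lt y z → lt x z)
    (hltinv : LeftInvariant lt) (huinv : LeftInvariant u) (hlinv : LeftInvariant l)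
    (hsce : IsSCExt lt u l) [H.Normal] (hcc : CompletelyConvex lt u l H)
    {x t k : G} (hu : u x t) (hlt : lt t k) (hxk : (x : G ⧸ H) = (k : G ⧸ H)) :
    (x : G ⧸ H) = (t : G ⧸ H) := by
  have h1 : u 1 (x⁻¹ * t) := by have := huinv x⁻¹ x t hu; simpa using this
  have h2 : lt (x⁻¹ * t) (x⁻¹ * k) := hltinv x⁻¹ t k hlt
  exact QuotientGroup.eq.mpr
    (key1 hirr htrans hltinv huinv hlinv hsce hcc h1 h2 (QuotientGroup.eq.mp hxk))

lemma key2' (hirr : ∀ x : G, ¬ lt x x) (htrans : ∀ x y z : G, lt x y → lt y z → lt x z)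
    (hltinv : LeftInvariant lt) (huinv : LeftInvariant u) (hlinv : LeftInvariant l)
    (hsce : IsSCExt lt u l) [H.Normal] (hcc : CompletelyConvex lt u l H)
    {x t k : G} (hl : l x t) (hlt : lt k t) (hxk : (x : G ⧸ H) = (k : G ⧸ H)) :
    (x : G ⧸ H) = (t : G ⧸ H) := by
  have h1 : l 1 (x⁻¹ * t) := by have := hlinv x⁻¹ x t hl; simpa using this
  have h2 : lt (x⁻¹ * k) (x⁻¹ * t) := hltinv x⁻¹ k t hlt
  exact QuotientGroup.eq.mpr
    (key2 hirr htrans hltinv huinv hlinv hsce hcc h1 h2 (QuotientGroup.eq.mp hxk))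

end Aux
section Aux2

set_option linter.unusedSectionVars false
set_option linter.unusedVariables false

variable {G : Type*} [Group G] {lt u l : G → G → Prop} {H : Subgroup G}

lemma qrel_of {r : G → G → Prop} {a b : G}
    (hne : (a : G ⧸ H) ≠ (b : G ⧸ H)) (h : r a b) : QRel r H (a : G ⧸ H) (b : G ⧸ H) :=
  ⟨hne, a, b, rfl, rfl, 1, one_mem H, by simpa using h⟩

lemma qrel_elim {r : G → G → Prop} {X Y : G ⧸ H} (h : QRel r H X Y) :
    X ≠ Y ∧ ∃ a b : G, (a : G ⧸ H) = X ∧ (b : G ⧸ H) = Y ∧ r a b := by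
  obtain ⟨hne, g1, g2, h1, h2, hh, hH, hr⟩ := h
  refine ⟨hne, g1, g2 * hh, h1, ?_, hr⟩
  rw [← h2]
  exact QuotientGroup.eq.mpr (by simpa [mul_assoc] using inv_mem hH)

lemma qrel_symm {r : G → G → Prop} [H.Normal] (hsymm : ∀ x y : G, r x y → r y x)
    {X Y : G ⧸ H} (h : QRel r H X Y) : QRel r H Y X := by
  obtain ⟨hne, a, b, ha, hb, hr⟩ := qrel_elim h
  rw [← ha, ← hb]
  exact qrel_of (hb.symm ▸ ha.symm ▸ hne.symm) (hsymm a b hr)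

lemma repr_left {r : G → G → Prop} (hrinv : LeftInvariant r) [H.Normal] {x y x' : G}
    (h : r x y) (hx : (x : G ⧸ H) = (x' : G ⧸ H)) :
    ∃ y' : G, (y' : G ⧸ H) = (y : G ⧸ H) ∧ r x' y' := by
  refine ⟨x' * x⁻¹ * y, ?_, ?_⟩
  · have h1 : ((x' * x⁻¹ : G) : G ⧸ H) = 1 := by
      rw [QuotientGroup.mk_mul, QuotientGroup.mk_inv, ← hx, mul_inv_cancel]
    rw [QuotientGroup.mk_mul, h1, one_mul]
  · have := hrinv (x' * x⁻¹) x y h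
    simpa [mul_assoc] using this

lemma repr_right {r : G → G → Prop} (hrinv : LeftInvariant r) [H.Normal] {x y y' : G}
    (h : r x y) (hy : (y : G ⧸ H) = (y' : G ⧸ H)) :
    ∃ x' : G, (x' : G ⧸ H) = (x : G ⧸ H) ∧ r x' y' := by
  refine ⟨y' * y⁻¹ * x, ?_, ?_⟩
  · have h1 : ((y' * y⁻¹ : G) : G ⧸ H) = 1 := by
      rw [QuotientGroup.mk_mul, QuotientGroup.mk_inv, ← hy, mul_inv_cancel]
    rw [QuotientGroup.mk_mul, h1, one_mul]
  · have h2 := hrinv (y' * y⁻¹) x y h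
    have h3 : y' * y⁻¹ * y = y' := by group
    rw [h3] at h2
    exact h2

/-- Align two witnesses for quotient relations `X → Y` to a common base point in `X`. -/
lemma qrel_align {r1 r2 : G → G → Prop} (h2inv : LeftInvariant r2) [H.Normal] {X Y : G ⧸ H}
    (h1 : QRel r1 H X Y) (h2 : QRel r2 H X Y) :
    ∃ a y1 y2 : G, (a : G ⧸ H) = X ∧ (y1 : G ⧸ H) = Y ∧ (y2 : G ⧸ H) = Y ∧
      r1 a y1 ∧ r2 a y2 := by
  obtain ⟨hne, a, y1, ha, hy1, hr1⟩ := qrel_elim h1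
  obtain ⟨-, a2, y2, ha2, hy2, hr2⟩ := qrel_elim h2
  obtain ⟨y2', hy2', hr2'⟩ := repr_left h2inv hr2 (ha2.trans ha.symm)
  exact ⟨a, y1, y2', ha, hy1, hy2'.trans hy2, hr1, hr2'⟩

/-- Align witnesses for `QRel r1 H Y X` and `QRel r2 H X Y` to a common base point in `X`. -/
lemma qrel_align' {r1 r2 : G → G → Prop} (h1inv : LeftInvariant r1) [H.Normal] {X Y : G ⧸ H}
    (h1 : QRel r1 H Y X) (h2 : QRel r2 H X Y) :
    ∃ a y1 y2 : G, (a : G ⧸ H) = X ∧ (y1 : G ⧸ H) = Y ∧ (y2 : G ⧸ H) = Y ∧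
      r1 y1 a ∧ r2 a y2 := by
  obtain ⟨hne, y1, a1, hy1, ha1, hr1⟩ := qrel_elim h1
  obtain ⟨hne2, a, y2, ha, hy2, hr2⟩ := qrel_elim h2
  obtain ⟨y1', hy1', hr1'⟩ := repr_right h1inv hr1 (ha1.trans ha.symm)
  exact ⟨a, y1', y2, ha, hy1'.trans hy1, hy2, hr1', hr2⟩

end Aux2
section Aux3

set_option linter.unusedSectionVars false
set_option linter.unusedVariables false

variable {G : Type*} [Group G] {lt u l : G → G → Prop} {H : Subgroup G} [H.Normal]
variable (hirr : ∀ x : G, ¬ lt x x) (htrans : ∀ x y z : G, lt x y → lt y z → lt x z)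
  (hltinv : LeftInvariant lt) (huinv : LeftInvariant u) (hlinv : LeftInvariant l)
  (hsce : IsSCExt lt u l) (hcc : CompletelyConvex lt u l H)

include hirr htrans hltinv huinv hlinv hsce hcc

lemma exc_lt_lt {X Y : G ⧸ H} (h1 : QRel lt H X Y) (h2 : QRel lt H Y X) : False := by
  obtain ⟨a, y1, y2, ha, hy1, hy2, hlt1, hlt2⟩ := qrel_align' hltinv h2 h1
  -- hlt1 : lt y1 a, hlt2 : lt a y2
  have hlt3 : lt y1 y2 := htrans _ _ _ hlt1 hlt2
  have hne12 : y1 ≠ y2 := by intro h; rw [h] at hlt3; exact hirr _ hlt3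
  have hb : Btwn lt u l y1 y2 a :=
    Or.inl ⟨hlt3, Or.inl ⟨hlt1, hlt2⟩⟩
  have hmem : a ∈ BSet lt u l y1 y2 := Set.mem_union_right _ ⟨hne12, hb⟩
  have := coset_convex hltinv huinv hlinv hcc (hy1.trans hy2.symm) hmem
  exact h1.1 (by rw [← ha, ← hy1]; exact this)

lemma exc_lt_u {X Y : G ⧸ H} (h1 : QRel lt H X Y) (h2 : QRel u H X Y) : False := by
  obtain ⟨a, y1, y2, ha, hy1, hy2, hlt1, hu2⟩ := qrel_align huinv h1 h2
  have := key1' hirr htrans hltinv huinv hlinv hsce hcc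
    (hsce.u_symm a y2 hu2) hlt1 (hy2.trans hy1.symm)
  exact h1.1 (by rw [← ha, ← hy2]; exact this.symm)

lemma exc_ltrev_l {X Y : G ⧸ H} (h1 : QRel lt H Y X) (h2 : QRel l H X Y) : False := by
  obtain ⟨a, y1, y2, ha, hy1, hy2, hlt1, hl2⟩ := qrel_align' hltinv h1 h2
  have := key2' hirr htrans hltinv huinv hlinv hsce hcc
    (hsce.l_symm a y2 hl2) hlt1 (hy2.trans hy1.symm)
  exact h2.1 (by rw [← ha, ← hy2]; exact this.symm)

lemma exc_u_l {X Y : G ⧸ H} (h1 : QRel u H X Y) (h2 : QRel l H X Y) : False := by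
  obtain ⟨a, y1, y2, ha, hy1, hy2, hu1, hl2⟩ := qrel_align hlinv h1 h2
  have hlt12 : lt y1 y2 := hsce.acyclic a y1 y2 hu1 hl2
  have hb : Btwn lt u l y1 y2 a :=
    Or.inl ⟨hlt12, Or.inr ⟨hsce.u_symm a y1 hu1, hl2⟩⟩
  have hne12 : y1 ≠ y2 := by intro h; rw [h] at hlt12; exact hirr _ hlt12
  have hmem : a ∈ BSet lt u l y1 y2 := Set.mem_union_right _ ⟨hne12, hb⟩
  have := coset_convex hltinv huinv hlinv hcc (hy1.trans hy2.symm) hmem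
  exact h1.1 (by rw [← ha, ← hy1]; exact this)

lemma exc_ltrev_u {X Y : G ⧸ H} (h1 : QRel lt H Y X) (h2 : QRel u H X Y) : False := by
  obtain ⟨a, y1, y2, ha, hy1, hy2, hlt1, hu2⟩ := qrel_align' hltinv h1 h2
  -- hlt1 : lt y1 a, hu2 : u a y2
  have hay2 : a ≠ y2 := by intro h; exact h2.1 (by rw [← ha, ← hy2, h])
  have hInc : Incomp lt a y2 := u_incomp hsce hay2 hu2
  by_cases h12 : y1 = y2
  · rw [h12] at hlt1; exact hInc.2.2 hlt1
  rcases (hsce.exactly_one y1 y2 h12).1 with h | h | h | h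
  · -- lt y1 y2 : y1 is a common lower bound of a and y2
    have hl' : l a y2 := hsce.l_of_lb a y2 hInc ⟨y1, Or.inr hlt1, Or.inr h⟩
    exact (eo_of_r (hsce.exactly_one a y2 hay2) hu2).2.2 hl'
  · exact hInc.2.2 (htrans _ _ _ h hlt1)
  · have hb : Btwn lt u l y1 y2 a :=
      Or.inr (Or.inr (Or.inr ⟨h, Or.inr ⟨hsce.u_symm a y2 hu2, hlt1⟩⟩))
    have hmem : a ∈ BSet lt u l y1 y2 := Set.mem_union_right _ ⟨h12, hb⟩
    have := coset_convex hltinv huinv hlinv hcc (hy1.trans hy2.symm) hmem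
    exact h2.1 (by rw [← ha, ← hy1]; exact this)
  · have := hsce.acyclic y2 a y1 (hsce.u_symm a y2 hu2) (hsce.l_symm y1 y2 h)
    exact asym hirr htrans hlt1 this

lemma exc_lt_l {X Y : G ⧸ H} (h1 : QRel lt H X Y) (h2 : QRel l H X Y) : False := by
  obtain ⟨a, y1, y2, ha, hy1, hy2, hlt1, hl2⟩ := qrel_align hlinv h1 h2
  -- hlt1 : lt a y1, hl2 : l a y2
  have hay2 : a ≠ y2 := by intro h; exact h2.1 (by rw [← ha, ← hy2, h])
  have hInc : Incomp lt a y2 := l_incomp hsce hay2 hl2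
  by_cases h12 : y1 = y2
  · rw [h12] at hlt1; exact hInc.2.1 hlt1
  rcases (hsce.exactly_one y1 y2 h12).1 with h | h | h | h
  · exact hInc.2.1 (htrans _ _ _ hlt1 h)
  · -- lt y2 y1 : y1 is a common upper bound of a and y2
    have hu' : u a y2 := hsce.u_of_ub a y2 hInc ⟨y1, Or.inr hlt1, Or.inr h⟩
    exact (eo_of_r (hsce.exactly_one a y2 hay2) hu').2.2 hl2
  · have := hsce.acyclic y2 y1 a (hsce.u_symm y1 y2 h) (hsce.l_symm a y2 hl2)
    exact asym hirr htrans hlt1 this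
  · have hb : Btwn lt u l y1 y2 a :=
      Or.inr (Or.inr (Or.inl ⟨h, Or.inr ⟨hsce.l_symm a y2 hl2, hlt1⟩⟩))
    have hmem : a ∈ BSet lt u l y1 y2 := Set.mem_union_right _ ⟨h12, hb⟩
    have := coset_convex hltinv huinv hlinv hcc (hy1.trans hy2.symm) hmem
    exact h2.1 (by rw [← ha, ← hy1]; exact this)

lemma qexactly_one {X Y : G ⧸ H} (hne : X ≠ Y) :
    ExactlyOne4 (QRel lt H X Y) (QRel lt H Y X) (QRel u H X Y) (QRel l H X Y) := by
  constructor
  · obtain ⟨a, rfl⟩ := QuotientGroup.mk_surjective X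
    obtain ⟨b, rfl⟩ := QuotientGroup.mk_surjective Y
    have hab : a ≠ b := fun h => hne (by rw [h])
    rcases (hsce.exactly_one a b hab).1 with h | h | h | h
    · exact Or.inl (qrel_of hne h)
    · exact Or.inr (Or.inl (qrel_of hne.symm h))
    · exact Or.inr (Or.inr (Or.inl (qrel_of hne h)))
    · exact Or.inr (Or.inr (Or.inr (qrel_of hne h)))
  · refine ⟨fun hp => ⟨fun hq => exc_lt_lt hirr htrans hltinv huinv hlinv hsce hcc hp hq,
      fun hr => exc_lt_u hirr htrans hltinv huinv hlinv hsce hcc hp hr,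
      fun hs => exc_lt_l hirr htrans hltinv huinv hlinv hsce hcc hp hs⟩,
      fun hq => ⟨fun hr => exc_ltrev_u hirr htrans hltinv huinv hlinv hsce hcc hq hr,
        fun hs => exc_ltrev_l hirr htrans hltinv huinv hlinv hsce hcc hq hs⟩,
      fun hr hs => exc_u_l hirr htrans hltinv huinv hlinv hsce hcc hr hs⟩

lemma match_lt {a b : G} (h : QRel lt H (a : G ⧸ H) (b : G ⧸ H)) : lt a b := by
  have hne : (a : G ⧸ H) ≠ (b : G ⧸ H) := h.1
  have hab : a ≠ b := fun h' => hne (by rw [h'])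
  rcases (hsce.exactly_one a b hab).1 with h' | h' | h' | h'
  · exact h'
  · exact absurd (qrel_of hne.symm h')
      (fun hq => exc_lt_lt hirr htrans hltinv huinv hlinv hsce hcc h hq)
  · exact absurd (qrel_of hne h')
      (fun hr => exc_lt_u hirr htrans hltinv huinv hlinv hsce hcc h hr)
  · exact absurd (qrel_of hne h')
      (fun hs => exc_lt_l hirr htrans hltinv huinv hlinv hsce hcc h hs)

lemma match_u {a b : G} (h : QRel u H (a : G ⧸ H) (b : G ⧸ H)) : u a b := by
  have hne : (a : G ⧸ H) ≠ (b : G ⧸ H) := h.1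
  have hab : a ≠ b := fun h' => hne (by rw [h'])
  rcases (hsce.exactly_one a b hab).1 with h' | h' | h' | h'
  · exact absurd (qrel_of hne h')
      (fun hp => exc_lt_u hirr htrans hltinv huinv hlinv hsce hcc hp h)
  · exact absurd (qrel_of hne.symm h')
      (fun hq => exc_ltrev_u hirr htrans hltinv huinv hlinv hsce hcc hq h)
  · exact h'
  · exact absurd (qrel_of hne h')
      (fun hs => exc_u_l hirr htrans hltinv huinv hlinv hsce hcc h hs)

lemma match_l {a b : G} (h : QRel l H (a : G ⧸ H) (b : G ⧸ H)) : l a b := by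
  have hne : (a : G ⧸ H) ≠ (b : G ⧸ H) := h.1
  have hab : a ≠ b := fun h' => hne (by rw [h'])
  rcases (hsce.exactly_one a b hab).1 with h' | h' | h' | h'
  · exact absurd (qrel_of hne h')
      (fun hp => exc_lt_l hirr htrans hltinv huinv hlinv hsce hcc hp h)
  · exact absurd (qrel_of hne.symm h')
      (fun hq => exc_ltrev_l hirr htrans hltinv huinv hlinv hsce hcc hq h)
  · exact absurd (qrel_of hne h')
      (fun hr => exc_u_l hirr htrans hltinv huinv hlinv hsce hcc hr h)
  · exact h'

end Aux3
section Aux4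

set_option linter.unusedSectionVars false
set_option linter.unusedVariables false

variable {G : Type*} [Group G] {lt u l : G → G → Prop} {H : Subgroup G} [H.Normal]

lemma qrel_leftinv {r : G → G → Prop} (hrinv : LeftInvariant r) :
    LeftInvariant (QRel r H) := by
  intro f X Y h
  obtain ⟨hne, a, b, ha, hb, hr⟩ := qrel_elim h
  obtain ⟨f₀, rfl⟩ := QuotientGroup.mk_surjective f
  refine ⟨fun hEq => hne (mul_left_cancel hEq), f₀ * a, f₀ * b, ?_, ?_, 1, one_mem H,
    by simpa using hrinv f₀ a b hr⟩
  · rw [QuotientGroup.mk_mul, ha]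
  · rw [QuotientGroup.mk_mul, hb]

variable (hirr : ∀ x : G, ¬ lt x x) (htrans : ∀ x y z : G, lt x y → lt y z → lt x z)
  (hltinv : LeftInvariant lt) (huinv : LeftInvariant u) (hlinv : LeftInvariant l)
  (hsce : IsSCExt lt u l) (hcc : CompletelyConvex lt u l H)

include hirr htrans hltinv huinv hlinv hsce hcc

lemma qtrans {X Y Z : G ⧸ H} (hXY : QRel lt H X Y) (hYZ : QRel lt H Y Z) :
    QRel lt H X Z := by
  obtain ⟨hne1, a, y, ha, hy, h1⟩ := qrel_elim hXY
  obtain ⟨hne2, y2, z, hy2, hz, h2⟩ := qrel_elim hYZ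
  obtain ⟨z', hz', h2'⟩ := repr_left hltinv h2 (hy2.trans hy.symm)
  have h3 : lt a z' := htrans _ _ _ h1 h2'
  have hXZ : X ≠ Z := by
    intro hEq
    rw [← hEq] at hYZ
    exact exc_lt_lt hirr htrans hltinv huinv hlinv hsce hcc hXY hYZ
  have hz'' : (z' : G ⧸ H) = Z := hz'.trans hz
  rw [← ha, ← hz'']
  exact qrel_of (by rw [ha, hz'']; exact hXZ) h3

lemma qsce : IsSCExt (QRel lt H) (QRel u H) (QRel l H) := by
  constructor
  · exact fun X Y h => qrel_symm hsce.u_symm h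
  · exact fun X Y h => qrel_symm hsce.l_symm h
  · exact fun X Y hne => qexactly_one hirr htrans hltinv huinv hlinv hsce hcc hne
  · -- u_of_ub
    rintro X Y hInc ⟨Z, hXZ, hYZ⟩
    rcases hXZ with rfl | hXZ
    · rcases hYZ with h | h
      · exact absurd h.symm hInc.1
      · exact absurd h hInc.2.2
    rcases hYZ with rfl | hYZ
    · exact absurd hXZ hInc.2.1
    obtain ⟨hneXZ, x, z1, hx, hz1, h1⟩ := qrel_elim hXZ
    obtain ⟨hneYZ, y, z2, hy, hz2, h2⟩ := qrel_elim hYZ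
    obtain ⟨y', hy', h2'⟩ := repr_right hltinv h2 (hz2.trans hz1.symm)
    have hyY : (y' : G ⧸ H) = Y := hy'.trans hy
    have hxy : x ≠ y' := by intro h; exact hInc.1 (by rw [← hx, ← hyY, h])
    have hn1 : ¬ lt x y' := by
      intro h
      exact hInc.2.1 (by rw [← hx, ← hyY]; exact qrel_of (by rw [hx, hyY]; exact hInc.1) h)
    have hn2 : ¬ lt y' x := by
      intro h
      exact hInc.2.2 (by rw [← hx, ← hyY]; exact qrel_of (by rw [hyY, hx]; exact hInc.1.symm) h)
    have hu' : u x y' := hsce.u_of_ub x y' ⟨hxy, hn1, hn2⟩ ⟨z1, Or.inr h1, Or.inr h2'⟩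
    rw [← hx, ← hyY]
    exact qrel_of (by rw [hx, hyY]; exact hInc.1) hu'
  · -- l_of_lb
    rintro X Y hInc ⟨Z, hZX, hZY⟩
    rcases hZX with rfl | hZX
    · rcases hZY with h | h
      · exact absurd h hInc.1
      · exact absurd h hInc.2.1
    rcases hZY with rfl | hZY
    · exact absurd hZX hInc.2.2
    obtain ⟨hneZX, z1, x, hz1, hx, h1⟩ := qrel_elim hZX
    obtain ⟨hneZY, z2, y, hz2, hy, h2⟩ := qrel_elim hZY
    obtain ⟨y', hy', h2'⟩ := repr_left hltinv h2 (hz2.trans hz1.symm)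
    have hyY : (y' : G ⧸ H) = Y := hy'.trans hy
    have hxy : x ≠ y' := by intro h; exact hInc.1 (by rw [← hx, ← hyY, h])
    have hn1 : ¬ lt x y' := by
      intro h
      exact hInc.2.1 (by rw [← hx, ← hyY]; exact qrel_of (by rw [hx, hyY]; exact hInc.1) h)
    have hn2 : ¬ lt y' x := by
      intro h
      exact hInc.2.2 (by rw [← hx, ← hyY]; exact qrel_of (by rw [hyY, hx]; exact hInc.1.symm) h)
    have hl' : l x y' := hsce.l_of_lb x y' ⟨hxy, hn1, hn2⟩ ⟨z1, Or.inr h1, Or.inr h2'⟩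
    rw [← hx, ← hyY]
    exact qrel_of (by rw [hx, hyY]; exact hInc.1) hl'
  · -- acyclic
    intro X Y Z hXY hXZ
    obtain ⟨hne1, a, y, ha, hy, h1⟩ := qrel_elim hXY
    obtain ⟨hne2, a2, z, ha2, hz, h2⟩ := qrel_elim hXZ
    obtain ⟨z', hz', h2'⟩ := repr_left hlinv h2 (ha2.trans ha.symm)
    have h3 : lt y z' := hsce.acyclic a y z' h1 h2'
    have hYZ : Y ≠ Z := by
      intro hEq
      rw [← hEq] at hXZ
      exact exc_u_l hirr htrans hltinv huinv hlinv hsce hcc hXY hXZ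
    have hzZ : (z' : G ⧸ H) = Z := hz'.trans hz
    rw [← hy, ← hzZ]
    exact qrel_of (by rw [hy, hzZ]; exact hYZ) h3

end Aux4
section Aux5

set_option linter.unusedSectionVars false
set_option linter.unusedVariables false

variable {G : Type*} [Group G] {lt u l : G → G → Prop} {H : Subgroup G} [H.Normal]

variable (hirr : ∀ x : G, ¬ lt x x) (htrans : ∀ x y z : G, lt x y → lt y z → lt x z)
  (hltinv : LeftInvariant lt) (huinv : LeftInvariant u) (hlinv : LeftInvariant l)
  (hsce : IsSCExt lt u l) (hcc : CompletelyConvex lt u l H)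

include hirr htrans hltinv huinv hlinv hsce hcc

lemma bset_proj {a b x : G} (hne : (a : G ⧸ H) ≠ (b : G ⧸ H))
    (hx : x ∈ BSet lt u l a b) :
    (x : G ⧸ H) ∈ BSet (QRel lt H) (QRel u H) (QRel l H) (a : G ⧸ H) (b : G ⧸ H) := by
  rcases hx with hx | ⟨hab, hbtwn⟩
  · rcases hx with rfl | hx
    · exact Set.mem_union_left _ (Set.mem_insert _ _)
    · rcases hx with rfl
      exact Set.mem_union_left _ (Set.mem_insert_of_mem _ rfl)
  · by_cases hxa : (x : G ⧸ H) = (a : G ⧸ H)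
    · exact Set.mem_union_left _ (by rw [hxa]; exact Set.mem_insert _ _)
    by_cases hxb : (x : G ⧸ H) = (b : G ⧸ H)
    · exact Set.mem_union_left _ (by rw [hxb]; exact Set.mem_insert_of_mem _ rfl)
    have hax : (a : G ⧸ H) ≠ (x : G ⧸ H) := fun h => hxa h.symm
    have hbx : (b : G ⧸ H) ≠ (x : G ⧸ H) := fun h => hxb h.symm
    refine Set.mem_union_right _ ⟨hne, ?_⟩
    rcases hbtwn with ⟨h1, h2 | h2⟩ | ⟨h1, h2 | h2⟩ | ⟨h1, h2 | h2⟩ | ⟨h1, h2 | h2⟩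
    · exact Or.inl ⟨qrel_of hne h1, Or.inl ⟨qrel_of hax h2.1, qrel_of hxb h2.2⟩⟩
    · exact Or.inl ⟨qrel_of hne h1, Or.inr ⟨qrel_of hax h2.1, qrel_of hxb h2.2⟩⟩
    · exact Or.inr (Or.inl ⟨qrel_of hne.symm h1,
        Or.inl ⟨qrel_of hbx h2.1, qrel_of hxa h2.2⟩⟩)
    · exact Or.inr (Or.inl ⟨qrel_of hne.symm h1,
        Or.inr ⟨qrel_of hbx h2.1, qrel_of hxa h2.2⟩⟩)
    · exact Or.inr (Or.inr (Or.inl ⟨qrel_of hne h1,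
        Or.inl ⟨qrel_of hax h2.1, qrel_of hxb h2.2⟩⟩))
    · exact Or.inr (Or.inr (Or.inl ⟨qrel_of hne h1,
        Or.inr ⟨qrel_of hbx h2.1, qrel_of hxa h2.2⟩⟩))
    · exact Or.inr (Or.inr (Or.inr ⟨qrel_of hne h1,
        Or.inl ⟨qrel_of hax h2.1, qrel_of hbx h2.2⟩⟩))
    · exact Or.inr (Or.inr (Or.inr ⟨qrel_of hne h1,
        Or.inr ⟨qrel_of hbx h2.1, qrel_of hax h2.2⟩⟩))

lemma bset_lift {a b : G} {X : G ⧸ H} (hne : (a : G ⧸ H) ≠ (b : G ⧸ H))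
    (hX : X ∈ BSet (QRel lt H) (QRel u H) (QRel l H) (a : G ⧸ H) (b : G ⧸ H)) :
    ∃ x : G, (x : G ⧸ H) = X ∧ x ∈ BSet lt u l a b := by
  have hab : a ≠ b := fun h => hne (by rw [h])
  rcases hX with hX | ⟨-, hbtwn⟩
  · rcases hX with rfl | hX
    · exact ⟨a, rfl, Set.mem_union_left _ (Set.mem_insert _ _)⟩
    · rcases hX with rfl
      exact ⟨b, rfl, Set.mem_union_left _ (Set.mem_insert_of_mem _ rfl)⟩
  · obtain ⟨c, rfl⟩ := QuotientGroup.mk_surjective X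
    refine ⟨c, rfl, Set.mem_union_right _ ⟨hab, ?_⟩⟩
    rcases hbtwn with ⟨h1, h2 | h2⟩ | ⟨h1, h2 | h2⟩ | ⟨h1, h2 | h2⟩ | ⟨h1, h2 | h2⟩
    · exact Or.inl ⟨match_lt hirr htrans hltinv huinv hlinv hsce hcc h1,
        Or.inl ⟨match_lt hirr htrans hltinv huinv hlinv hsce hcc h2.1,
          match_lt hirr htrans hltinv huinv hlinv hsce hcc h2.2⟩⟩
    · exact Or.inl ⟨match_lt hirr htrans hltinv huinv hlinv hsce hcc h1,
        Or.inr ⟨match_u hirr htrans hltinv huinv hlinv hsce hcc h2.1,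
          match_l hirr htrans hltinv huinv hlinv hsce hcc h2.2⟩⟩
    · exact Or.inr (Or.inl ⟨match_lt hirr htrans hltinv huinv hlinv hsce hcc h1,
        Or.inl ⟨match_lt hirr htrans hltinv huinv hlinv hsce hcc h2.1,
          match_lt hirr htrans hltinv huinv hlinv hsce hcc h2.2⟩⟩)
    · exact Or.inr (Or.inl ⟨match_lt hirr htrans hltinv huinv hlinv hsce hcc h1,
        Or.inr ⟨match_u hirr htrans hltinv huinv hlinv hsce hcc h2.1,
          match_l hirr htrans hltinv huinv hlinv hsce hcc h2.2⟩⟩)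
    · exact Or.inr (Or.inr (Or.inl ⟨match_l hirr htrans hltinv huinv hlinv hsce hcc h1,
        Or.inl ⟨match_l hirr htrans hltinv huinv hlinv hsce hcc h2.1,
          match_lt hirr htrans hltinv huinv hlinv hsce hcc h2.2⟩⟩))
    · exact Or.inr (Or.inr (Or.inl ⟨match_l hirr htrans hltinv huinv hlinv hsce hcc h1,
        Or.inr ⟨match_l hirr htrans hltinv huinv hlinv hsce hcc h2.1,
          match_lt hirr htrans hltinv huinv hlinv hsce hcc h2.2⟩⟩))
    · exact Or.inr (Or.inr (Or.inr ⟨match_u hirr htrans hltinv huinv hlinv hsce hcc h1,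
        Or.inl ⟨match_u hirr htrans hltinv huinv hlinv hsce hcc h2.1,
          match_lt hirr htrans hltinv huinv hlinv hsce hcc h2.2⟩⟩))
    · exact Or.inr (Or.inr (Or.inr ⟨match_u hirr htrans hltinv huinv hlinv hsce hcc h1,
        Or.inr ⟨match_u hirr htrans hltinv huinv hlinv hsce hcc h2.1,
          match_lt hirr htrans hltinv huinv hlinv hsce hcc h2.2⟩⟩))

lemma oproj {x c : G} (h : ORel lt u l x c) :
    ORel (QRel lt H) (QRel u H) (QRel l H) (x : G ⧸ H) (c : G ⧸ H) := by
  intro P hP Q hQ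
  by_cases hxc : (x : G ⧸ H) = (c : G ⧸ H)
  · have hPx : P = (x : G ⧸ H) := by
      rcases hP with hP | ⟨hne', -⟩
      · rcases hP with rfl | hP
        · rfl
        · rcases hP with rfl; exact hxc.symm
      · exact absurd hxc hne'
    have hQx : Q = (x : G ⧸ H) := by
      rcases hQ with hQ | ⟨hne', -⟩
      · rcases hQ with rfl | hQ
        · rfl
        · rcases hQ with rfl; exact hxc.symm
      · exact absurd hxc hne'
    exact Or.inl (hPx.trans hQx.symm)
  · obtain ⟨p, hp, hpB⟩ := bset_lift hirr htrans hltinv huinv hlinv hsce hcc hxc hP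
    obtain ⟨q, hq, hqB⟩ := bset_lift hirr htrans hltinv huinv hlinv hsce hcc hxc hQ
    by_cases hPQ : P = Q
    · exact Or.inl hPQ
    rcases h p hpB q hqB with rfl | hlt | hlt
    · exact absurd (hp.symm.trans hq) hPQ
    · refine Or.inr (Or.inl ?_)
      rw [← hp, ← hq]
      exact qrel_of (by rw [hp, hq]; exact hPQ) hlt
    · refine Or.inr (Or.inr ?_)
      rw [← hp, ← hq]
      exact qrel_of (by rw [hp, hq]; exact fun h' => hPQ h'.symm) hlt

lemma qrect (hrect : Rectifiable lt u l) :
    Rectifiable (QRel lt H) (QRel u H) (QRel l H) := by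
  classical
  intro A B hAB
  obtain ⟨a, rfl⟩ := QuotientGroup.mk_surjective A
  obtain ⟨b, rfl⟩ := QuotientGroup.mk_surjective B
  have hab : a ≠ b := fun h => hAB (by rw [h])
  obtain ⟨F, hF1, hF2⟩ := hrect a b hab
  refine ⟨F.image (QuotientGroup.mk : G → G ⧸ H), ?_, ?_⟩
  · intro X hX
    simp only [Finset.coe_image, Set.mem_image, Finset.mem_coe] at hX
    obtain ⟨x, hxF, rfl⟩ := hX
    exact bset_proj hirr htrans hltinv huinv hlinv hsce hcc hAB (hF1 hxF)
  · intro X hX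
    obtain ⟨x, hxX, hxB⟩ := bset_lift hirr htrans hltinv huinv hlinv hsce hcc hAB hX
    obtain ⟨c, hcF, hOc⟩ := hF2 x hxB
    refine ⟨(c : G ⧸ H), Finset.mem_image_of_mem _ hcF, ?_⟩
    rw [← hxX]
    exact oproj hirr htrans hltinv huinv hlinv hsce hcc hOc

end Aux5
/-- The induced left-invariant partial order and simply connected extension on
`G ⧸ H` are rectifiable whenever the extension on `G` is. -/
theorem stmt11 {G : Type*} [Group G] (lt u l : G → G → Prop)
    (hirr : ∀ x : G, ¬ lt x x)
    (htrans : ∀ x y z : G, lt x y → lt y z → lt x z)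
    (hltinv : LeftInvariant lt) (huinv : LeftInvariant u) (hlinv : LeftInvariant l)
    (hsce : IsSCExt lt u l)
    (hrect : Rectifiable lt u l)
    (H : Subgroup G) [H.Normal]
    (hcc : CompletelyConvex lt u l H) :
    (∀ x : G ⧸ H, ¬ QRel lt H x x) ∧
    (∀ x y z : G ⧸ H, QRel lt H x y → QRel lt H y z → QRel lt H x z) ∧
    LeftInvariant (QRel lt H) ∧
    LeftInvariant (QRel u H) ∧
    LeftInvariant (QRel l H) ∧
    IsSCExt (QRel lt H) (QRel u H) (QRel l H) ∧
    Rectifiable (QRel lt H) (QRel u H) (QRel l H) := by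
  exact ⟨fun x h => h.1 rfl,
    fun X Y Z h1 h2 => qtrans hirr htrans hltinv huinv hlinv hsce hcc h1 h2,
    qrel_leftinv hltinv, qrel_leftinv huinv, qrel_leftinv hlinv,
    qsce hirr htrans hltinv huinv hlinv hsce hcc,
    qrect hirr htrans hltinv huinv hlinv hsce hcc hrect⟩

end PaperSC
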